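/- Let A := colim_{B≥1} F_{≥B} be the filtered colimit of rings taken along the natural projections F_{≥B} → F_{≥B+1} (which forget the B-th coordinate). Then A is a henselian local ring, and the compatible projections F_{≥B} → F_∞ induce an isomorphism from the residue field of A onto F_∞. -/

import Mathlib

open PowerSeries

set_option maxHeartbeats 1000000
set_option synthInstance.maxHeartbeats 400000

noncomputable section

variable (k : Type) [Field k]
variable (O : ℕ → Type) [∀ i, CommRing (O i)]
variable (π : ∀ i, O i) (e : ℕ → ℕ)
variable (ψ : ∀ i, ((PowerSeries k) ⧸ (Ideal.span {(X : PowerSeries k) ^ e i})) ≃+*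
    ((O i) ⧸ (Ideal.span {π i ^ e i})))
variable (hψ : ∀ i, ψ i (Ideal.Quotient.mk _ (X : PowerSeries k)) = Ideal.Quotient.mk _ (π i))

/-- The product ring `∏_{i ∈ ℕ} O_i × O_∞`, where `O_∞ = k[[π_∞]]`. -/
abbrev ProdRing : Type := ((i : ℕ) → O i) × PowerSeries k

/-- The defining condition for membership in the subring `O`:
for every `n ≥ 1` there is `B ≥ n` such that for all `i ≥ B` the `i`-th coordinate is
congruent to (a lift of) `ψ_i` of the `∞`-coordinate modulo `π_i^n`. -/
def closeMem (x : ProdRing k O) : Prop :=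
  ∀ n : ℕ, 1 ≤ n → ∃ B, n ≤ B ∧ ∀ i, B ≤ i → ∃ y : O i,
    Ideal.Quotient.mk (Ideal.span {π i ^ e i}) y
      = ψ i (Ideal.Quotient.mk (Ideal.span {(X : PowerSeries k) ^ e i}) x.2)
    ∧ x.1 i - y ∈ Ideal.span {π i ^ n}

/-- The ring `O` of a family of close fields, as a subring of `∏_{i ∈ ℕ} O_i × O_∞`. -/
def closeSubring : Subring (ProdRing k O) where
  carrier := {x | closeMem k O π e ψ x}
  zero_mem' := by
    intro n hn
    refine ⟨n, le_rfl, fun i hi => ⟨0, by simp, by simp⟩⟩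
  one_mem' := by
    intro n hn
    refine ⟨n, le_rfl, fun i hi => ⟨1, by simp, by simp⟩⟩
  add_mem' := by
    intro a b ha hb n hn
    obtain ⟨B1, hB1, h1⟩ := ha n hn
    obtain ⟨B2, hB2, h2⟩ := hb n hn
    refine ⟨max B1 B2, hB1.trans (le_max_left _ _), fun i hi => ?_⟩
    obtain ⟨y1, hy1, hy1'⟩ := h1 i ((le_max_left _ _).trans hi)
    obtain ⟨y2, hy2, hy2'⟩ := h2 i ((le_max_right _ _).trans hi)
    refine ⟨y1 + y2, ?_, ?_⟩
    · have : (a + b).2 = a.2 + b.2 := rfl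
      rw [this, map_add, map_add, map_add, hy1, hy2]
    · have : (a + b).1 i - (y1 + y2) = (a.1 i - y1) + (b.1 i - y2) := by
        show a.1 i + b.1 i - (y1 + y2) = _
        ring
      rw [this]
      exact Ideal.add_mem _ hy1' hy2'
  neg_mem' := by
    intro a ha n hn
    obtain ⟨B, hB, h⟩ := ha n hn
    refine ⟨B, hB, fun i hi => ?_⟩
    obtain ⟨y, hy, hy'⟩ := h i hi
    refine ⟨-y, ?_, ?_⟩
    · have : (-a).2 = -a.2 := rfl
      rw [this, map_neg, map_neg, map_neg, hy]
    · have : (-a).1 i - (-y) = -(a.1 i - y) := by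
        show -a.1 i - (-y) = _
        ring
      rw [this]
      exact neg_mem hy'
  mul_mem' := by
    intro a b ha hb n hn
    obtain ⟨B1, hB1, h1⟩ := ha n hn
    obtain ⟨B2, hB2, h2⟩ := hb n hn
    refine ⟨max B1 B2, hB1.trans (le_max_left _ _), fun i hi => ?_⟩
    obtain ⟨y1, hy1, hy1'⟩ := h1 i ((le_max_left _ _).trans hi)
    obtain ⟨y2, hy2, hy2'⟩ := h2 i ((le_max_right _ _).trans hi)
    refine ⟨y1 * y2, ?_, ?_⟩
    · have : (a * b).2 = a.2 * b.2 := rfl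
      rw [this, map_mul, map_mul, map_mul, hy1, hy2]
    · have : (a * b).1 i - (y1 * y2) = (a.1 i - y1) * b.1 i + y1 * (b.1 i - y2) := by
        show a.1 i * b.1 i - (y1 * y2) = _
        ring
      rw [this]
      exact Ideal.add_mem _ (Ideal.mul_mem_right _ _ hy1') (Ideal.mul_mem_left _ _ hy2')

/-- The element `π = (π_1, π_2, …, π_∞)` of `O`. -/
def piO : closeSubring k O π e ψ :=
  ⟨(π, (X : PowerSeries k)), by
    intro n hn
    exact ⟨n, le_rfl, fun i hi => ⟨π i, (hψ i).symm, by simp⟩⟩⟩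

/-- The ring `F = O[1/π]`. -/
abbrev Fring : Type := Localization.Away (piO k O π e ψ hψ)

/-- Coordinate projection `O → O_j` for `j ∈ ℕ`. -/
def projO (j : ℕ) : closeSubring k O π e ψ →+* O j :=
  (Pi.evalRingHom O j).comp ((RingHom.fst _ _).comp (closeSubring k O π e ψ).subtype)

/-- Coordinate projection `O → O_∞`. -/
def projInf : closeSubring k O π e ψ →+* PowerSeries k :=
  (RingHom.snd _ _).comp (closeSubring k O π e ψ).subtype

/-- The product ring `∏_{i ≥ B} O_i × O_∞`. -/
abbrev ProdRingGe (B : ℕ) : Type := ((i : {i : ℕ // B ≤ i}) → O i.1) × PowerSeries k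

/-- The projection `∏_{i ∈ ℕ} O_i × O_∞ → ∏_{i ≥ B} O_i × O_∞`. -/
def projGe (B : ℕ) : ProdRing k O →+* ProdRingGe k O B :=
  RingHom.prodMap (Pi.ringHom fun i => Pi.evalRingHom O i.1) (RingHom.id _)

/-- The composite `O → ∏_{i ≥ B} O_i × O_∞`. -/
def toGe (B : ℕ) : closeSubring k O π e ψ →+* ProdRingGe k O B :=
  (projGe k O B).comp (closeSubring k O π e ψ).subtype

/-- `O_{≥ B}`, the image of `O` under the coordinate projection. -/
def OgeB (B : ℕ) : Subring (ProdRingGe k O B) := (toGe k O π e ψ B).range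

/-- The projection `O → O_{≥ B}`. -/
def toOgeB (B : ℕ) : closeSubring k O π e ψ →+* OgeB k O π e ψ B :=
  (toGe k O π e ψ B).rangeRestrict

/-- The image of `π` in `O_{≥ B}`. -/
def piGe (B : ℕ) : OgeB k O π e ψ B := toOgeB k O π e ψ B (piO k O π e ψ hψ)

/-- The ring `F_{≥ B} = O_{≥ B}[1/π]`. -/
abbrev FgeB (B : ℕ) : Type := Localization.Away (piGe k O π e ψ hψ B)

/-- The projection `F → F_{≥ B}`. -/
def projFge (B : ℕ) : Fring k O π e ψ hψ →+* FgeB k O π e ψ hψ B :=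
  Localization.awayLift
    ((algebraMap (OgeB k O π e ψ B) (FgeB k O π e ψ hψ B)).comp (toOgeB k O π e ψ B))
    (piO k O π e ψ hψ)
    (IsLocalization.map_units (M := Submonoid.powers (piGe k O π e ψ hψ B)) _
      ⟨piGe k O π e ψ hψ B, Submonoid.mem_powers _⟩)

/-- `F_{≥ B} = O_{≥ B}[1/π]` (wrapped in a definition). -/
def FgeBI (B : ℕ) : Type := FgeB k O π e ψ hψ B

instance (B : ℕ) : CommRing (FgeBI k O π e ψ hψ B) :=
  inferInstanceAs (CommRing (FgeB k O π e ψ hψ B))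

instance (B : ℕ) : Algebra (OgeB k O π e ψ B) (FgeBI k O π e ψ hψ B) :=
  inferInstanceAs (Algebra (OgeB k O π e ψ B) (FgeB k O π e ψ hψ B))

instance (B : ℕ) : IsLocalization.Away (piGe k O π e ψ hψ B) (FgeBI k O π e ψ hψ B) :=
  inferInstanceAs (IsLocalization.Away (piGe k O π e ψ hψ B) (FgeB k O π e ψ hψ B))

/-- The `∞`-coordinate projection `O_{≥ B} → O_∞`. -/
def sndGe (B : ℕ) : OgeB k O π e ψ B →+* PowerSeries k :=
  (RingHom.snd _ _).comp (OgeB k O π e ψ B).subtype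

/-- The projection `F_{≥ B} → F_∞`. -/
def FgeBtoFinf (B : ℕ) : FgeBI k O π e ψ hψ B →+* FractionRing (PowerSeries k) :=
  Localization.awayLift
    ((algebraMap (PowerSeries k) (FractionRing (PowerSeries k))).comp (sndGe k O π e ψ B))
    (piGe k O π e ψ hψ B)
    (IsLocalization.map_units (M := nonZeroDivisors (PowerSeries k))
      (FractionRing (PowerSeries k))
      ⟨(X : PowerSeries k), mem_nonZeroDivisors_of_ne_zero PowerSeries.X_ne_zero⟩)

/-- The projection `∏_{i ≥ B} O_i × O_∞ → ∏_{i ≥ B+1} O_i × O_∞`. -/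
def projGeStep (B : ℕ) : ProdRingGe k O B →+* ProdRingGe k O (B + 1) :=
  RingHom.prodMap
    (Pi.ringHom fun i =>
      Pi.evalRingHom (fun j : {j : ℕ // B ≤ j} => O j.1) ⟨i.1, le_trans (Nat.le_succ B) i.2⟩)
    (RingHom.id _)

/-- The natural projection `O_{≥ B} → O_{≥ B+1}`. -/
def stepO (B : ℕ) : OgeB k O π e ψ B →+* OgeB k O π e ψ (B + 1) :=
  RingHom.codRestrict ((projGeStep k O B).comp (OgeB k O π e ψ B).subtype)
    (OgeB k O π e ψ (B + 1))
    (fun y => by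
      obtain ⟨x, hx⟩ := RingHom.mem_range.mp y.2
      refine RingHom.mem_range.mpr ⟨x, ?_⟩
      have hy : ((projGeStep k O B).comp (OgeB k O π e ψ B).subtype) y
          = projGeStep k O B (y : ProdRingGe k O B) := rfl
      rw [hy, ← hx]
      rfl)

/-- The projection `O_{≥ B} → O_{≥ B+1}` sends `π` to `π`. -/
lemma stepO_piGe (B : ℕ) :
    stepO k O π e ψ B (piGe k O π e ψ hψ B) = piGe k O π e ψ hψ (B + 1) := by
  refine Subtype.ext (Prod.ext ?_ ?_)
  · funext i
    rfl
  · rfl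

/-- The natural projection `F_{≥ B} → F_{≥ B+1}` (forgetting the `B`-th coordinate). -/
def FgeBstep (B : ℕ) : FgeBI k O π e ψ hψ B →+* FgeBI k O π e ψ hψ (B + 1) :=
  Localization.awayLift
    ((algebraMap (OgeB k O π e ψ (B + 1)) (FgeBI k O π e ψ hψ (B + 1))).comp
      (stepO k O π e ψ B))
    (piGe k O π e ψ hψ B)
    (by
      rw [RingHom.comp_apply, stepO_piGe]
      exact IsLocalization.map_units (M := Submonoid.powers (piGe k O π e ψ hψ (B + 1)))
        (FgeBI k O π e ψ hψ (B + 1))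
        ⟨piGe k O π e ψ hψ (B + 1), Submonoid.mem_powers _⟩)

/-- The transition maps `F_{≥ B} → F_{≥ B'}` for `B ≤ B'`. -/
def transitF : ∀ {B B' : ℕ}, B ≤ B' → (FgeBI k O π e ψ hψ B →+* FgeBI k O π e ψ hψ B') :=
  fun {B B'} h =>
    Nat.leRec (motive := fun m _ => FgeBI k O π e ψ hψ B →+* FgeBI k O π e ψ hψ m)
      (RingHom.id _)
      (fun {m} (_ : B ≤ m) ih => (FgeBstep k O π e ψ hψ m).comp ih) h

namespace CF

open Polynomial

section Basic

variable (B : ℕ)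

lemma toOgeB_surjective : Function.Surjective (toOgeB k O π e ψ B) := by
  rintro ⟨y, hy⟩
  obtain ⟨x, hx⟩ := RingHom.mem_range.mp hy
  exact ⟨x, Subtype.ext hx⟩

lemma sndGe_toOgeB (x : closeSubring k O π e ψ) :
    sndGe k O π e ψ B (toOgeB k O π e ψ B x) = (x : ProdRing k O).2 := rfl

lemma stepO_toOgeB (x : closeSubring k O π e ψ) :
    stepO k O π e ψ B (toOgeB k O π e ψ B x) = toOgeB k O π e ψ (B+1) x :=
  Subtype.ext (Prod.ext (funext fun _ => rfl) rfl)

lemma piGe_eq : piGe k O π e ψ hψ B = toOgeB k O π e ψ B (piO k O π e ψ hψ) := rfl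

lemma awayLift_algebraMap {R P : Type*} [CommRing R] [CommRing P] (f : R →+* P) (r : R)
    (hr : IsUnit (f r)) (a : R) :
    Localization.awayLift f r hr (algebraMap R (Localization.Away r) a) = f a :=
  IsLocalization.Away.lift_eq r hr a

lemma FgeBstep_algebraMap (y : OgeB k O π e ψ B) :
    FgeBstep k O π e ψ hψ B (algebraMap _ (FgeBI k O π e ψ hψ B) y)
      = algebraMap _ (FgeBI k O π e ψ hψ (B+1)) (stepO k O π e ψ B y) := by
  unfold FgeBstep; exact awayLift_algebraMap _ _ _ _

lemma FgeBtoFinf_algebraMap (y : OgeB k O π e ψ B) :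
    FgeBtoFinf k O π e ψ hψ B (algebraMap _ _ y)
      = algebraMap (PowerSeries k) (FractionRing (PowerSeries k)) (sndGe k O π e ψ B y) := by
  unfold FgeBtoFinf; exact awayLift_algebraMap _ _ _ _

lemma transitF_self (x : FgeBI k O π e ψ hψ B) :
    transitF k O π e ψ hψ (le_refl B) x = x := by
  unfold transitF
  rw [Nat.leRec_self]
  rfl

lemma transitF_succ {B B' : ℕ} (h : B ≤ B') (h2 : B ≤ B' + 1) (x : FgeBI k O π e ψ hψ B) :
    transitF k O π e ψ hψ h2 x
      = FgeBstep k O π e ψ hψ B' (transitF k O π e ψ hψ h x) := by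
  unfold transitF
  rw [Nat.leRec_succ _ _ h]
  rfl

end Basic

section Transit

lemma transitF_transitF {B B' B'' : ℕ} (h : B ≤ B') (h' : B' ≤ B'') (x : FgeBI k O π e ψ hψ B) :
    transitF k O π e ψ hψ h' (transitF k O π e ψ hψ h x)
      = transitF k O π e ψ hψ (h.trans h') x := by
  induction B'', h' using Nat.le_induction with
  | base => rw [transitF_self]
  | succ m hm ih =>
      rw [transitF_succ k O π e ψ hψ hm, transitF_succ k O π e ψ hψ (h.trans hm), ih]

lemma g_comp_transitF {A : Type} [CommRing A] (g : ∀ B : ℕ, FgeBI k O π e ψ hψ B →+* A)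
    (hcompat : ∀ B : ℕ, (g (B + 1)).comp (FgeBstep k O π e ψ hψ B) = g B)
    {B B' : ℕ} (h : B ≤ B') (x : FgeBI k O π e ψ hψ B) :
    g B' (transitF k O π e ψ hψ h x) = g B x := by
  induction B', h using Nat.le_induction with
  | base => rw [transitF_self]
  | succ m hm ih =>
      rw [transitF_succ k O π e ψ hψ hm]
      show ((g (m+1)).comp (FgeBstep k O π e ψ hψ m)) (transitF k O π e ψ hψ hm x) = _
      rw [hcompat m]
      exact ih

lemma FgeBtoFinf_step (B : ℕ) :
    (FgeBtoFinf k O π e ψ hψ (B+1)).comp (FgeBstep k O π e ψ hψ B)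
      = FgeBtoFinf k O π e ψ hψ B := by
  apply IsLocalization.ringHom_ext (Submonoid.powers (piGe k O π e ψ hψ B))
  ext y
  simp only [RingHom.coe_comp, Function.comp_apply]
  rw [FgeBstep_algebraMap, FgeBtoFinf_algebraMap, FgeBtoFinf_algebraMap]
  rfl

lemma FgeBtoFinf_transitF {B B' : ℕ} (h : B ≤ B') (x : FgeBI k O π e ψ hψ B) :
    FgeBtoFinf k O π e ψ hψ B' (transitF k O π e ψ hψ h x)
      = FgeBtoFinf k O π e ψ hψ B x := by
  induction B', h using Nat.le_induction with
  | base => rw [transitF_self]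
  | succ m hm ih =>
      rw [transitF_succ k O π e ψ hψ hm]
      show ((FgeBtoFinf k O π e ψ hψ (m+1)).comp (FgeBstep k O π e ψ hψ m)) _ = _
      rw [FgeBtoFinf_step]
      exact ih

lemma transitF_algebraMap {B B' : ℕ} (h : B ≤ B') (x : closeSubring k O π e ψ) :
    transitF k O π e ψ hψ h (algebraMap _ (FgeBI k O π e ψ hψ B) (toOgeB k O π e ψ B x))
      = algebraMap _ (FgeBI k O π e ψ hψ B') (toOgeB k O π e ψ B' x) := by
  induction B', h using Nat.le_induction with
  | base => rw [transitF_self]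
  | succ m hm ih =>
      rw [transitF_succ k O π e ψ hψ hm, ih, FgeBstep_algebraMap, stepO_toOgeB]

lemma algebraMap_piGe_isUnit (B : ℕ) :
    IsUnit (algebraMap _ (FgeBI k O π e ψ hψ B) (piGe k O π e ψ hψ B)) :=
  IsLocalization.Away.algebraMap_isUnit _

lemma exists_rep (B : ℕ) (z : FgeBI k O π e ψ hψ B) :
    ∃ (x : closeSubring k O π e ψ) (N : ℕ),
      z * (algebraMap _ (FgeBI k O π e ψ hψ B) (piGe k O π e ψ hψ B))^N
        = algebraMap _ (FgeBI k O π e ψ hψ B) (toOgeB k O π e ψ B x) := by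
  obtain ⟨⟨a, s⟩, hs⟩ := IsLocalization.surj (M := Submonoid.powers (piGe k O π e ψ hψ B)) z
  obtain ⟨N, hN⟩ := s.2
  obtain ⟨x, hx⟩ := toOgeB_surjective k O π e ψ B a
  refine ⟨x, N, ?_⟩
  have hN' : piGe k O π e ψ hψ B ^ N = (s : OgeB k O π e ψ B) := hN
  rw [← map_pow, hN', hx]
  exact hs

end Transit

section Small

lemma coords_small (he : ∀ i, i ≤ e i) (x : closeSubring k O π e ψ)
    (hx2 : (x : ProdRing k O).2 = 0) (n : ℕ) :
    ∃ B, n ≤ B ∧ ∀ i, B ≤ i → (x : ProdRing k O).1 i ∈ Ideal.span {π i ^ n} := by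
  rcases Nat.eq_zero_or_pos n with rfl | hn
  · exact ⟨0, le_rfl, fun i _ => by simp [Ideal.span_singleton_one]⟩
  · obtain ⟨B, hB, h⟩ := x.2 n hn
    refine ⟨B, hB, fun i hi => ?_⟩
    obtain ⟨y, hy, hy'⟩ := h i hi
    rw [hx2, map_zero, map_zero] at hy
    have h1 : y ∈ Ideal.span {π i ^ e i} := by rwa [Ideal.Quotient.eq_zero_iff_mem] at hy
    have h2 : y ∈ Ideal.span {π i ^ n} :=
      Ideal.span_singleton_le_span_singleton.mpr
        (pow_dvd_pow _ ((hB.trans hi).trans (he i))) h1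
    simpa using Ideal.add_mem _ hy' h2

lemma mem_closeSubring_of_small (x : ProdRing k O) (hx2 : x.2 = 0)
    (h : ∀ n, 1 ≤ n → ∃ B, ∀ i, B ≤ i → x.1 i ∈ Ideal.span {π i ^ n}) :
    x ∈ closeSubring k O π e ψ := by
  intro n hn
  obtain ⟨B, hB⟩ := h n hn
  refine ⟨max n B, le_max_left _ _, fun i hi => ?_⟩
  refine ⟨0, by rw [hx2]; simp, ?_⟩
  simpa using hB i ((le_max_right n B).trans hi)

end Small

section Surj

lemma exists_liftO (f : PowerSeries k) :
    ∃ x : closeSubring k O π e ψ, (x : ProdRing k O).2 = f := by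
  have hchoose : ∀ i, ∃ y : O i, Ideal.Quotient.mk (Ideal.span {π i ^ e i}) y
      = ψ i (Ideal.Quotient.mk (Ideal.span {(X : PowerSeries k) ^ e i}) f) :=
    fun i => Ideal.Quotient.mk_surjective _
  choose y hy using hchoose
  refine ⟨⟨(y, f), ?_⟩, rfl⟩
  intro n hn
  exact ⟨n, le_rfl, fun i hi => ⟨y i, hy i, by simp⟩⟩

lemma FgeBtoFinf_surjective (B : ℕ) :
    Function.Surjective (FgeBtoFinf k O π e ψ hψ B) := by
  intro z
  obtain ⟨⟨a, s⟩, hs⟩ := IsLocalization.surj (M := nonZeroDivisors (PowerSeries k)) z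
  have hs0 : (s : PowerSeries k) ≠ 0 := nonZeroDivisors.ne_zero s.2
  obtain ⟨m, u, hu⟩ :=
    IsDiscreteValuationRing.eq_unit_mul_pow_irreducible hs0 PowerSeries.X_irreducible
  obtain ⟨x, hx⟩ := exists_liftO k O π e ψ (a * ↑u⁻¹)
  have hun := algebraMap_piGe_isUnit k O π e ψ hψ B
  have hXne : (algebraMap (PowerSeries k) (FractionRing (PowerSeries k))) (X : PowerSeries k)
      ≠ 0 := fun hc => PowerSeries.X_ne_zero (IsFractionRing.to_map_eq_zero_iff.mp hc)
  have hmap : FgeBtoFinf k O π e ψ hψ B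
      (algebraMap _ _ (piGe k O π e ψ hψ B))
      = algebraMap (PowerSeries k) (FractionRing (PowerSeries k)) (X : PowerSeries k) := by
    rw [FgeBtoFinf_algebraMap]; rfl
  have hinv : FgeBtoFinf k O π e ψ hψ B ↑hun.unit⁻¹
      * algebraMap (PowerSeries k) (FractionRing (PowerSeries k)) (X : PowerSeries k) = 1 := by
    rw [← hmap, ← map_mul, IsUnit.val_inv_mul, map_one]
  have key : algebraMap (PowerSeries k) (FractionRing (PowerSeries k)) (a * ↑u⁻¹)
      = z * (algebraMap (PowerSeries k) (FractionRing (PowerSeries k)) (X : PowerSeries k))^m := by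
    have h1 : (s : PowerSeries k) * ↑u⁻¹ = (X : PowerSeries k) ^ m := by
      rw [hu, mul_comm (↑u : PowerSeries k), mul_assoc, Units.mul_inv, mul_one]
    calc algebraMap (PowerSeries k) (FractionRing (PowerSeries k)) (a * ↑u⁻¹)
        = (z * algebraMap (PowerSeries k) (FractionRing (PowerSeries k)) ↑s)
            * algebraMap (PowerSeries k) (FractionRing (PowerSeries k)) ↑u⁻¹ := by
          rw [map_mul, hs]
      _ = z * algebraMap (PowerSeries k) (FractionRing (PowerSeries k)) ((↑s : PowerSeries k) * ↑u⁻¹) := by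
          rw [mul_assoc, ← map_mul]
      _ = z * (algebraMap (PowerSeries k) (FractionRing (PowerSeries k)) (X : PowerSeries k))^m := by
          rw [h1, map_pow]
  refine ⟨algebraMap _ _ (toOgeB k O π e ψ B x) * ↑hun.unit⁻¹^m, ?_⟩
  apply mul_right_cancel₀ (pow_ne_zero m hXne)
  calc FgeBtoFinf k O π e ψ hψ B (algebraMap _ _ (toOgeB k O π e ψ B x) * ↑hun.unit⁻¹^m)
      * (algebraMap (PowerSeries k) (FractionRing (PowerSeries k)) (X : PowerSeries k))^m
      = algebraMap (PowerSeries k) (FractionRing (PowerSeries k)) (a * ↑u⁻¹)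
        * (FgeBtoFinf k O π e ψ hψ B ↑hun.unit⁻¹
            * algebraMap (PowerSeries k) (FractionRing (PowerSeries k)) (X : PowerSeries k))^m := by
        rw [map_mul, map_pow, FgeBtoFinf_algebraMap, sndGe_toOgeB, hx, mul_pow]; ring
    _ = z * (algebraMap (PowerSeries k) (FractionRing (PowerSeries k)) (X : PowerSeries k))^m := by
        rw [hinv, one_pow, mul_one, key]

end Surj

section HA

variable {A : Type} [CommRing A]

lemma exists_common (g : ∀ B : ℕ, FgeBI k O π e ψ hψ B →+* A)
    (hcompat : ∀ B : ℕ, (g (B + 1)).comp (FgeBstep k O π e ψ hψ B) = g B)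
    (hker : ∀ (B : ℕ) (x : FgeBI k O π e ψ hψ B), g B x = 0 →
      ∃ (B' : ℕ) (h : B ≤ B'), transitF k O π e ψ hψ h x = 0)
    {B B' : ℕ} (x : FgeBI k O π e ψ hψ B) (x' : FgeBI k O π e ψ hψ B')
    (hg : g B x = g B' x') :
    ∃ (C : ℕ) (h : B ≤ C) (h' : B' ≤ C),
      transitF k O π e ψ hψ h x = transitF k O π e ψ hψ h' x' := by
  have h1 : B ≤ max B B' := le_max_left _ _
  have h2 : B' ≤ max B B' := le_max_right _ _
  have hz : g (max B B') (transitF k O π e ψ hψ h1 x - transitF k O π e ψ hψ h2 x') = 0 := by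
    rw [map_sub, g_comp_transitF k O π e ψ hψ g hcompat,
      g_comp_transitF k O π e ψ hψ g hcompat, hg, sub_self]
  obtain ⟨C, hC, hzero⟩ := hker _ _ hz
  rw [map_sub, transitF_transitF, transitF_transitF, sub_eq_zero] at hzero
  exact ⟨C, h1.trans hC, h2.trans hC, hzero⟩

variable (g : ∀ B : ℕ, FgeBI k O π e ψ hψ B →+* A)
    (hcompat : ∀ B : ℕ, (g (B + 1)).comp (FgeBstep k O π e ψ hψ B) = g B)
    (hsurj : ∀ a : A, ∃ (B : ℕ) (x : FgeBI k O π e ψ hψ B), g B x = a)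
    (hker : ∀ (B : ℕ) (x : FgeBI k O π e ψ hψ B), g B x = 0 →
      ∃ (B' : ℕ) (h : B ≤ B'), transitF k O π e ψ hψ h x = 0)

/-- The underlying function of the induced map `A → F_∞`. -/
def hAfun : A → FractionRing (PowerSeries k) :=
  fun a => FgeBtoFinf k O π e ψ hψ _ (hsurj a).choose_spec.choose

include hcompat hker in
lemma hAfun_eq {B : ℕ} (x : FgeBI k O π e ψ hψ B) (a : A) (ha : g B x = a) :
    hAfun k O π e ψ hψ g hsurj a = FgeBtoFinf k O π e ψ hψ B x := by
  obtain ⟨C, h, h', hc⟩ := exists_common k O π e ψ hψ g hcompat hker _ x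
    ((hsurj a).choose_spec.choose_spec.trans ha.symm)
  rw [hAfun, ← FgeBtoFinf_transitF k O π e ψ hψ h, hc, FgeBtoFinf_transitF]

/-- The induced map `A → F_∞` as a ring homomorphism. -/
def hA : A →+* FractionRing (PowerSeries k) where
  toFun := hAfun k O π e ψ hψ g hsurj
  map_one' := by
    show hAfun k O π e ψ hψ g hsurj 1 = 1
    rw [hAfun_eq k O π e ψ hψ g hcompat hsurj hker (1 : FgeBI k O π e ψ hψ 0) 1 (map_one _),
      map_one]
  map_zero' := by
    show hAfun k O π e ψ hψ g hsurj 0 = 0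
    rw [hAfun_eq k O π e ψ hψ g hcompat hsurj hker (0 : FgeBI k O π e ψ hψ 0) 0 (map_zero _),
      map_zero]
  map_mul' a b := by
    show hAfun k O π e ψ hψ g hsurj (a * b)
      = hAfun k O π e ψ hψ g hsurj a * hAfun k O π e ψ hψ g hsurj b
    obtain ⟨Ba, xa, ha⟩ := hsurj a
    obtain ⟨Bb, xb, hb⟩ := hsurj b
    have h1 : Ba ≤ max Ba Bb := le_max_left _ _
    have h2 : Bb ≤ max Ba Bb := le_max_right _ _
    have ha' : g (max Ba Bb) (transitF k O π e ψ hψ h1 xa) = a := by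
      rw [g_comp_transitF k O π e ψ hψ g hcompat, ha]
    have hb' : g (max Ba Bb) (transitF k O π e ψ hψ h2 xb) = b := by
      rw [g_comp_transitF k O π e ψ hψ g hcompat, hb]
    rw [hAfun_eq k O π e ψ hψ g hcompat hsurj hker
        (transitF k O π e ψ hψ h1 xa * transitF k O π e ψ hψ h2 xb) (a * b)
        (by rw [map_mul, ha', hb']),
      hAfun_eq k O π e ψ hψ g hcompat hsurj hker _ a ha',
      hAfun_eq k O π e ψ hψ g hcompat hsurj hker _ b hb', map_mul]
  map_add' a b := by
    show hAfun k O π e ψ hψ g hsurj (a + b)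
      = hAfun k O π e ψ hψ g hsurj a + hAfun k O π e ψ hψ g hsurj b
    obtain ⟨Ba, xa, ha⟩ := hsurj a
    obtain ⟨Bb, xb, hb⟩ := hsurj b
    have h1 : Ba ≤ max Ba Bb := le_max_left _ _
    have h2 : Bb ≤ max Ba Bb := le_max_right _ _
    have ha' : g (max Ba Bb) (transitF k O π e ψ hψ h1 xa) = a := by
      rw [g_comp_transitF k O π e ψ hψ g hcompat, ha]
    have hb' : g (max Ba Bb) (transitF k O π e ψ hψ h2 xb) = b := by
      rw [g_comp_transitF k O π e ψ hψ g hcompat, hb]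
    rw [hAfun_eq k O π e ψ hψ g hcompat hsurj hker
        (transitF k O π e ψ hψ h1 xa + transitF k O π e ψ hψ h2 xb) (a + b)
        (by rw [map_add, ha', hb']),
      hAfun_eq k O π e ψ hψ g hcompat hsurj hker _ a ha',
      hAfun_eq k O π e ψ hψ g hcompat hsurj hker _ b hb', map_add]

lemma hA_g {B : ℕ} (x : FgeBI k O π e ψ hψ B) :
    hA k O π e ψ hψ g hcompat hsurj hker (g B x) = FgeBtoFinf k O π e ψ hψ B x :=
  hAfun_eq k O π e ψ hψ g hcompat hsurj hker x _ rfl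

lemma hA_surjective : Function.Surjective (hA k O π e ψ hψ g hcompat hsurj hker) := by
  intro z
  obtain ⟨x, hx⟩ := FgeBtoFinf_surjective k O π e ψ hψ 0 z
  exact ⟨g 0 x, by rw [hA_g, hx]⟩

end HA

section Inverse

variable [∀ i, IsDomain (O i)] [∀ i, IsDiscreteValuationRing (O i)]

lemma span_pow_le {R : Type*} [CommRing R] (a : R) {m n : ℕ} (h : n ≤ m) :
    Ideal.span {a ^ m} ≤ Ideal.span {a ^ n} :=
  Ideal.span_singleton_le_span_singleton.mpr (pow_dvd_pow _ h)

lemma isUnit_of_mk_unit {R : Type*} [CommRing R] [IsLocalRing R] {I : Ideal R}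
    (hI : I ≤ IsLocalRing.maximalIdeal R) {a : R}
    (ha : IsUnit (Ideal.Quotient.mk I a)) : IsUnit a := by
  have hlh := isLocalHom_of_le_jacobson_bot I
    (le_trans hI (le_of_eq (IsLocalRing.jacobson_eq_maximalIdeal ⊥ bot_ne_top).symm))
  exact hlh.map_nonunit a ha

include hψ in
lemma exists_inverse (he : ∀ i, i ≤ e i) (hπ : ∀ i, Irreducible (π i))
    (x : closeSubring k O π e ψ) (hx : (x : ProdRing k O).2 ≠ 0) :
    ∃ (r : ℕ) (c : closeSubring k O π e ψ) (B : ℕ),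
      ((x : ProdRing k O).2) * ((c : ProdRing k O).2) = (X : PowerSeries k) ^ (2*r)
      ∧ ∀ i, B ≤ i →
        (x : ProdRing k O).1 i * (c : ProdRing k O).1 i = π i ^ (2*r) := by
  obtain ⟨r, v, hv⟩ :=
    IsDiscreteValuationRing.eq_unit_mul_pow_irreducible hx PowerSeries.X_irreducible
  obtain ⟨B₀, hB₀, h₀⟩ := x.prop (r+1) (by omega)
  -- the coordinates of x have valuation exactly r, eventually
  have hunit : ∀ i, ∃ U : (O i)ˣ, B₀ ≤ i → (x : ProdRing k O).1 i = π i ^ r * ↑U := by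
    intro i
    by_cases hi : B₀ ≤ i
    swap
    · exact ⟨1, fun h => absurd h hi⟩
    obtain ⟨y, hy, hy'⟩ := h₀ i hi
    obtain ⟨V, hV⟩ := Ideal.Quotient.mk_surjective
      (ψ i (Ideal.Quotient.mk (Ideal.span {(X : PowerSeries k) ^ e i}) (↑v : PowerSeries k)))
    have hre : r + 1 ≤ e i := le_trans (le_trans (hB₀.trans hi) (he i)) le_rfl
    have hy2 : Ideal.Quotient.mk (Ideal.span {π i ^ e i}) y
        = Ideal.Quotient.mk (Ideal.span {π i ^ e i}) (V * π i ^ r) := by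
      rw [hy, hv, map_mul, map_pow, map_mul, map_pow, hψ i, ← hV, ← map_pow, ← map_mul]
    have hVunit : IsUnit V := by
      have hvu : IsUnit (ψ i (Ideal.Quotient.mk
          (Ideal.span {(X : PowerSeries k) ^ e i}) (↑v : PowerSeries k))) :=
        (v.isUnit.map (Ideal.Quotient.mk (Ideal.span {(X : PowerSeries k) ^ e i}))).map (ψ i)
      rw [← hV] at hvu
      refine isUnit_of_mk_unit ?_ hvu
      rw [(hπ i).maximalIdeal_eq]
      exact Ideal.span_singleton_le_span_singleton.mpr (dvd_pow_self _ (by omega))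
    have hmem : (x : ProdRing k O).1 i - V * π i ^ r ∈ Ideal.span {π i ^ (r+1)} := by
      have h1 : y - V * π i ^ r ∈ Ideal.span {π i ^ (r+1)} :=
        span_pow_le (π i) hre (Ideal.Quotient.eq.mp hy2)
      simpa using Ideal.add_mem _ hy' h1
    obtain ⟨t, ht⟩ := Ideal.mem_span_singleton.mp hmem
    have hu2 : IsUnit (V + π i * t) := by
      by_contra hnu
      have h1 : V + π i * t ∈ IsLocalRing.maximalIdeal (O i) :=
        (IsLocalRing.mem_maximalIdeal _).mpr (mem_nonunits_iff.mpr hnu)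
      have h2 : π i * t ∈ IsLocalRing.maximalIdeal (O i) :=
        Ideal.mul_mem_right _ _ ((IsLocalRing.mem_maximalIdeal _).mpr
          (mem_nonunits_iff.mpr (fun hc => (hπ i).not_isUnit hc)))
      have h3 : V ∈ IsLocalRing.maximalIdeal (O i) := by
        have := sub_mem h1 h2; simpa using this
      exact (mem_nonunits_iff.mp ((IsLocalRing.mem_maximalIdeal _).mp h3)) hVunit
    refine ⟨hu2.unit, fun _ => ?_⟩
    rw [IsUnit.unit_spec]
    linear_combination ht
  choose U hU using hunit
  -- the candidate inverse tuple
  set cfun : ∀ i, O i := fun i => if B₀ ≤ i then π i ^ r * ↑(U i)⁻¹ else 0 with hcfun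
  have hxc2 : (x : ProdRing k O).2 * ((↑v⁻¹ : PowerSeries k) * (X : PowerSeries k) ^ r)
      = (X : PowerSeries k) ^ (2*r) := by
    rw [hv, show (↑v * (X : PowerSeries k) ^ r) * (↑v⁻¹ * (X : PowerSeries k) ^ r)
      = (↑v * ↑v⁻¹) * ((X : PowerSeries k) ^ r * (X:PowerSeries k) ^ r) from by ring,
      Units.mul_inv, one_mul, ← pow_add, two_mul]
  have hmemc : (cfun, (↑v⁻¹ : PowerSeries k) * (X : PowerSeries k) ^ r)
      ∈ closeSubring k O π e ψ := by
    intro n hn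
    obtain ⟨B₁, hB₁, h₁⟩ := x.prop (n + 2*r) (by omega)
    refine ⟨max (max B₀ B₁) (n + 2*r), le_trans (by omega) (le_max_right _ _), fun i hi => ?_⟩
    have hiB₀ : B₀ ≤ i := le_trans (le_trans (le_max_left _ _) (le_max_left _ _)) hi
    have hiB₁ : B₁ ≤ i := le_trans (le_trans (le_max_right _ _) (le_max_left _ _)) hi
    have hin2r : n + 2*r ≤ i := le_trans (le_max_right _ _) hi
    have hie : n + 2*r ≤ e i := le_trans hin2r (he i)
    obtain ⟨y', hy'Q⟩ := Ideal.Quotient.mk_surjective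
      (ψ i (Ideal.Quotient.mk (Ideal.span {(X : PowerSeries k) ^ e i})
        ((↑v⁻¹ : PowerSeries k) * (X : PowerSeries k) ^ r)))
    refine ⟨y', hy'Q, ?_⟩
    obtain ⟨y, hy, hy'⟩ := h₁ i hiB₁
    -- y * y' ≡ π ^ (2r)
    have hyy' : y * y' - π i ^ (2*r) ∈ Ideal.span {π i ^ (n + 2*r)} := by
      refine span_pow_le (π i) hie ?_
      rw [← Ideal.Quotient.eq, map_mul, hy, hy'Q, ← map_mul, ← map_mul, hxc2, map_pow,
        map_pow, hψ i, ← map_pow]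
    have hxy' : (x : ProdRing k O).1 i * y' - π i ^ (2*r)
        ∈ Ideal.span {π i ^ (n + 2*r)} := by
      have h2 : ((x : ProdRing k O).1 i - y) * y' ∈ Ideal.span {π i ^ (n + 2*r)} :=
        Ideal.mul_mem_right _ _ hy'
      have := Ideal.add_mem _ h2 hyy'
      simpa [sub_mul, sub_add_sub_cancel] using this
    -- multiply the desired difference by x_i
    have hxmul : (x : ProdRing k O).1 i * (cfun i - y')
        ∈ Ideal.span {π i ^ (n + 2*r)} := by
      have hci : (x : ProdRing k O).1 i * cfun i = π i ^ (2*r) := by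
        rw [hcfun]
        simp only [if_pos hiB₀]
        rw [hU i hiB₀, show π i ^ r * ↑(U i) * (π i ^ r * ↑(U i)⁻¹)
          = (π i ^ r * π i ^ r) * (↑(U i) * ↑(U i)⁻¹) from by ring, Units.mul_inv,
          mul_one, ← pow_add, two_mul]
      rw [mul_sub, hci]
      have := Ideal.sub_mem _ (Ideal.zero_mem _) hxy'
      simpa using this
    -- cancel π^r and the unit
    rw [hU i hiB₀] at hxmul
    obtain ⟨d, hd⟩ := Ideal.mem_span_singleton.mp hxmul
    refine Ideal.mem_span_singleton.mpr ?_
    have hdvd : π i ^ (n + r) ∣ ↑(U i) * (cfun i - y') := by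
      refine (mul_dvd_mul_iff_left (pow_ne_zero r (hπ i).ne_zero)).mp ?_
      rw [show π i ^ r * (↑(U i) * (cfun i - y')) = π i ^ r * ↑(U i) * (cfun i - y') from
        by ring, hd, ← pow_add]
      exact ⟨d, by ring_nf⟩
    have := (Units.dvd_mul_left).mp hdvd
    exact dvd_trans (pow_dvd_pow _ (Nat.le_add_right n r)) this
  refine ⟨r, ⟨_, hmemc⟩, B₀, hxc2, fun i hi => ?_⟩
  show (x : ProdRing k O).1 i * cfun i = π i ^ (2*r)
  rw [hcfun]
  simp only [if_pos hi]
  rw [hU i hi, show π i ^ r * ↑(U i) * (π i ^ r * ↑(U i)⁻¹)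
    = (π i ^ r * π i ^ r) * (↑(U i) * ↑(U i)⁻¹) from by ring, Units.mul_inv,
    mul_one, ← pow_add, two_mul]

lemma coe_pow_fst (y : closeSubring k O π e ψ) (n : ℕ) (i : ℕ) :
    ((y ^ n : closeSubring k O π e ψ) : ProdRing k O).1 i = ((y : ProdRing k O).1 i) ^ n := by
  induction n with
  | zero => rfl
  | succ n ih =>
      rw [pow_succ, pow_succ, ← ih]
      rfl

lemma coe_pow_snd (y : closeSubring k O π e ψ) (n : ℕ) :
    ((y ^ n : closeSubring k O π e ψ) : ProdRing k O).2 = ((y : ProdRing k O).2) ^ n := by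
  induction n with
  | zero => rfl
  | succ n ih =>
      rw [pow_succ, pow_succ, ← ih]
      rfl

include hψ in
lemma isUnit_transitF (he : ∀ i, i ≤ e i) (hπ : ∀ i, Irreducible (π i))
    (B : ℕ) (z : FgeBI k O π e ψ hψ B) (hz : FgeBtoFinf k O π e ψ hψ B z ≠ 0) :
    ∃ (B' : ℕ) (h : B ≤ B'), IsUnit (transitF k O π e ψ hψ h z) := by
  obtain ⟨x, N, hxN⟩ := exists_rep k O π e ψ hψ B z
  have hXne : (algebraMap (PowerSeries k) (FractionRing (PowerSeries k))) (X : PowerSeries k)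
      ≠ 0 := fun hc => PowerSeries.X_ne_zero (IsFractionRing.to_map_eq_zero_iff.mp hc)
  have hx2 : (x : ProdRing k O).2 ≠ 0 := by
    intro h0
    apply hz
    have hmap := congrArg (FgeBtoFinf k O π e ψ hψ B) hxN
    rw [map_mul, map_pow, FgeBtoFinf_algebraMap, FgeBtoFinf_algebraMap, sndGe_toOgeB, h0,
      map_zero] at hmap
    have hX : sndGe k O π e ψ B (piGe k O π e ψ hψ B) = (X : PowerSeries k) := rfl
    rw [hX] at hmap
    rcases mul_eq_zero.mp hmap with h | h
    · exact h
    · exact absurd h (pow_ne_zero _ hXne)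
  obtain ⟨r, c, B₀, hc2, hc1⟩ := exists_inverse k O π e ψ hψ he hπ x hx2
  refine ⟨max B B₀, le_max_left B B₀, ?_⟩
  have hkey : toOgeB k O π e ψ (max B B₀) (x * c)
      = piGe k O π e ψ hψ (max B B₀) ^ (2*r) := by
    rw [piGe_eq, ← map_pow]
    refine Subtype.ext (Prod.ext (funext fun i => ?_) ?_)
    · show ((x * c : closeSubring k O π e ψ) : ProdRing k O).1 i.1
        = ((piO k O π e ψ hψ ^ (2*r) : closeSubring k O π e ψ) : ProdRing k O).1 i.1
      rw [coe_pow_fst]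
      exact hc1 i.1 ((le_max_right B B₀).trans i.2)
    · show ((x * c : closeSubring k O π e ψ) : ProdRing k O).2
        = ((piO k O π e ψ hψ ^ (2*r) : closeSubring k O π e ψ) : ProdRing k O).2
      rw [coe_pow_snd]
      exact hc2
  have h1 := congrArg (transitF k O π e ψ hψ (le_max_left B B₀)) hxN
  rw [map_mul, map_pow, piGe_eq, transitF_algebraMap, transitF_algebraMap, ← piGe_eq] at h1
  have hprod : transitF k O π e ψ hψ (le_max_left B B₀) z
      * ((algebraMap _ (FgeBI k O π e ψ hψ (max B B₀)) (piGe k O π e ψ hψ (max B B₀)))^N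
          * algebraMap _ _ (toOgeB k O π e ψ (max B B₀) c))
      = (algebraMap _ (FgeBI k O π e ψ hψ (max B B₀)) (piGe k O π e ψ hψ (max B B₀)))^(2*r)
      := by
    rw [← mul_assoc, h1, ← map_mul, ← map_mul, hkey, map_pow]
  refine isUnit_of_mul_isUnit_left (y := (algebraMap _ (FgeBI k O π e ψ hψ (max B B₀))
    (piGe k O π e ψ hψ (max B B₀)))^N * algebraMap _ _ (toOgeB k O π e ψ (max B B₀) c)) ?_
  rw [hprod]
  exact (algebraMap_piGe_isUnit k O π e ψ hψ _).pow (2*r)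

end Inverse

section Newton

open Polynomial

lemma newton_lipschitz {R : Type*} [CommRing R] (I : Ideal R) (H : R[X]) (h1 : H.coeff 1 = 1)
    {z w : R} (hz : z ∈ I) (hw : w ∈ I) :
    ∃ d ∈ I, (z - H.eval z) - (w - H.eval w) = (z - w) * d := by
  set q := H.divX.divX with hq
  have hH : H = Polynomial.X^2 * q + Polynomial.X + Polynomial.C (H.coeff 0) := by
    have e1 : Polynomial.X * H.divX + Polynomial.C (H.coeff 0) = H := X_mul_divX_add H
    have e2 : Polynomial.X * q + Polynomial.C (H.divX.coeff 0) = H.divX := X_mul_divX_add H.divX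
    have e3 : H.divX.coeff 0 = 1 := by rw [coeff_divX, h1]
    rw [e3] at e2
    calc H = Polynomial.X * H.divX + Polynomial.C (H.coeff 0) := e1.symm
      _ = Polynomial.X * (Polynomial.X * q + Polynomial.C 1) + Polynomial.C (H.coeff 0) := by rw [e2]
      _ = Polynomial.X^2 * q + Polynomial.X + Polynomial.C (H.coeff 0) := by rw [map_one]; ring
  obtain ⟨s, hs⟩ := sub_dvd_eval_sub w z q
  have hevz : H.eval z = z^2 * q.eval z + z + H.coeff 0 := by
    conv_lhs => rw [hH]
    simp [eval_add, eval_mul, eval_pow]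
  have hevw : H.eval w = w^2 * q.eval w + w + H.coeff 0 := by
    conv_lhs => rw [hH]
    simp [eval_add, eval_mul, eval_pow]
  refine ⟨-((w + z) * q.eval w) - z * (z * s), ?_, ?_⟩
  · exact Ideal.sub_mem _ (neg_mem (Ideal.mul_mem_right _ _ (Ideal.add_mem _ hw hz)))
      (Ideal.mul_mem_right _ _ hz)
  · linear_combination hevw - hevz + z^2 * hs

lemma newton {R : Type*} [CommRing R] (I : Ideal R) [IsAdicComplete I R] (H : R[X])
    (h1 : H.coeff 1 = 1) (h0 : H.coeff 0 ∈ I) :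
    ∃ a, H.eval a = 0 ∧ a ∈ I := by
  set seq : ℕ → R := fun n => Nat.rec (0 : R) (fun _ z => z - H.eval z) n with hseq
  have hstep : ∀ n, seq (n+1) = seq n - H.eval (seq n) := fun n => rfl
  have hseq0 : seq 0 = 0 := rfl
  have h00 : H.eval 0 = H.coeff 0 := (coeff_zero_eq_eval_zero H).symm
  have hmem : ∀ n, seq n ∈ I := by
    intro n
    induction n with
    | zero => exact I.zero_mem
    | succ n ih =>
        rw [hstep]
        obtain ⟨d, hd, hid⟩ := newton_lipschitz I H h1 ih I.zero_mem
        have hrw : seq n - H.eval (seq n) = seq n * d - H.coeff 0 := by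
          rw [← h00]; linear_combination hid
        rw [hrw]
        exact Ideal.sub_mem _ (Ideal.mul_mem_right _ _ ih) h0
  have hdiff : ∀ n, seq (n+1) - seq n ∈ I^(n+1) := by
    intro n
    induction n with
    | zero =>
        have hrw : seq (0+1) - seq 0 = -(H.coeff 0) := by
          rw [hstep 0, hseq0, h00]; ring
        rw [hrw, zero_add, pow_one]
        exact neg_mem h0
    | succ n ih =>
        obtain ⟨d, hd, hid⟩ := newton_lipschitz I H h1 (hmem (n+1)) (hmem n)
        have hrw : seq (n+1+1) - seq (n+1) = (seq (n+1) - seq n) * d := by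
          rw [hstep (n+1)]
          conv_lhs => rw [hstep n]
          linear_combination hid
        rw [hrw, pow_succ]
        exact Ideal.mul_mem_mul ih hd
  have hcau : ∀ {m n}, m ≤ n → seq m ≡ seq n [SMOD (I^m • (⊤ : Submodule R R))] := by
    intro m n h
    induction n, h using Nat.le_induction with
    | base => rfl
    | succ n hn ih =>
        refine ih.trans ?_
        rw [SModEq.sub_mem]
        rw [← Ideal.one_eq_top, Ideal.smul_eq_mul, mul_one]
        have : seq n - seq (n+1) = -(seq (n+1) - seq n) := by ring
        rw [this]
        exact neg_mem (Ideal.pow_le_pow_right (by omega) (hdiff n))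
  have hp : IsPrecomplete I R := inferInstance
  obtain ⟨L, hL⟩ := hp.prec fun {m n} h => hcau h
  have hLI : L ∈ I := by
    have h1' := hL 1
    rw [SModEq.sub_mem, ← Ideal.one_eq_top, Ideal.smul_eq_mul, mul_one, pow_one] at h1'
    have : L = seq 1 - (seq 1 - L) := by ring
    rw [this]
    exact Ideal.sub_mem _ (hmem 1) h1'
  refine ⟨L, ?_, hLI⟩
  have hzero : ∀ n, H.eval L ∈ I^n := by
    intro n
    obtain ⟨d, hd, hid⟩ := newton_lipschitz I H h1 hLI (hmem n)
    have hn1 := hL (n+1)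
    rw [SModEq.sub_mem, ← Ideal.one_eq_top, Ideal.smul_eq_mul, mul_one] at hn1
    have hn0 := hL n
    rw [SModEq.sub_mem, ← Ideal.one_eq_top, Ideal.smul_eq_mul, mul_one] at hn0
    -- H.eval L = (seq (n+1) - L) - (L - seq n)*d - (seq n - ... )
    -- from hid : (L - H.eval L) - (seq n - H.eval (seq n)) = (L - seq n) * d
    -- and seq (n+1) = seq n - H.eval (seq n)
    have hexp : H.eval L = -(seq (n+1) - L) - (L - seq n) * d := by
      rw [hstep n]
      linear_combination -hid
    rw [hexp]
    refine Ideal.sub_mem _ (neg_mem (Ideal.pow_le_pow_right (by omega) (hn1))) ?_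
    have hLs : L - seq n ∈ I ^ n := by
      have : L - seq n = -(seq n - L) := by ring
      rw [this]; exact neg_mem hn0
    exact Ideal.mul_mem_right _ _ hLs
  have hh : IsHausdorff I R := inferInstance
  exact hh.haus _ (fun n => by
    rw [SModEq.zero, ← Ideal.one_eq_top, Ideal.smul_eq_mul, mul_one]
    exact hzero n)

lemma root_mem_span {R : Type*} [CommRing R] [IsLocalRing R] (H : R[X])
    (h1 : H.coeff 1 = 1) {a : R} (ha : a ∈ IsLocalRing.maximalIdeal R)
    (hroot : H.eval a = 0) : a ∈ Ideal.span {H.coeff 0} := by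
  have he : a * H.divX.eval a + H.coeff 0 = 0 := by
    have h2 : Polynomial.eval a (Polynomial.X * H.divX + Polynomial.C (H.coeff 0))
        = Polynomial.eval a H := by rw [X_mul_divX_add]
    simp only [eval_add, eval_mul, eval_X, eval_C] at h2
    rw [hroot] at h2
    linear_combination h2
  have hunit : IsUnit (H.divX.eval a) := by
    by_contra hnu
    have h1' : H.divX.eval a ∈ IsLocalRing.maximalIdeal R :=
      (IsLocalRing.mem_maximalIdeal _).mpr (mem_nonunits_iff.mpr hnu)
    obtain ⟨s, hs⟩ := sub_dvd_eval_sub a 0 H.divX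
    have hc0 : H.divX.eval 0 = 1 := by
      rw [← coeff_zero_eq_eval_zero, coeff_divX, h1]
    have hone : (1 : R) ∈ IsLocalRing.maximalIdeal R := by
      have hmem2 : H.divX.eval a - 1 ∈ IsLocalRing.maximalIdeal R := by
        rw [← hc0]
        have hs' : H.divX.eval a - H.divX.eval 0 = a * s := by simpa using hs
        rw [hs']
        exact Ideal.mul_mem_right _ _ ha
      have := sub_mem h1' hmem2
      simpa using this
    exact (IsLocalRing.maximalIdeal.isMaximal R).ne_top (Ideal.eq_top_of_isUnit_mem _ hone isUnit_one)
  obtain ⟨u, hu⟩ := hunit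
  refine Ideal.mem_span_singleton.mpr ?_
  -- a = -coeff0 * u⁻¹
  have : a = H.coeff 0 * (-(↑u⁻¹ : R)) := by
    have h2 : a * ↑u = -(H.coeff 0) := by rw [hu]; linear_combination he
    calc a = a * (↑u * ↑u⁻¹) := by rw [Units.mul_inv, mul_one]
      _ = (a * ↑u) * ↑u⁻¹ := by ring
      _ = -(H.coeff 0) * ↑u⁻¹ := by rw [h2]
      _ = H.coeff 0 * (-(↑u⁻¹ : R)) := by ring
  exact Dvd.intro _ this.symm

end Newton

section RootO

variable [∀ i, IsDomain (O i)] [∀ i, IsDiscreteValuationRing (O i)]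
variable [∀ i, IsAdicComplete (Ideal.span {π i}) (O i)]

include hψ in
lemma rootO (he : ∀ i, i ≤ e i) (hπ : ∀ i, Irreducible (π i))
    (P : Polynomial (closeSubring k O π e ψ))
    (h1 : P.coeff 1 = 1)
    (h0inf : ((P.coeff 0 : closeSubring k O π e ψ) : ProdRing k O).2 = 0) :
    ∃ (a : closeSubring k O π e ψ) (B₁ : ℕ),
      (a : ProdRing k O).2 = 0
      ∧ projInf k O π e ψ (P.eval a) = 0
      ∧ ∀ i, B₁ ≤ i → projO k O π e ψ i (P.eval a) = 0 := by
  obtain ⟨B₁, hB₁, hsmall₁⟩ := coords_small k O π e ψ he (P.coeff 0) h0inf 1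
  have hex : ∀ i, ∃ a : O i, B₁ ≤ i →
      (P.map (projO k O π e ψ i)).eval a = 0
      ∧ a ∈ Ideal.span {projO k O π e ψ i (P.coeff 0)} := by
    intro i
    by_cases hi : B₁ ≤ i
    swap
    · exact ⟨0, fun h => absurd h hi⟩
    have hc1 : (P.map (projO k O π e ψ i)).coeff 1 = 1 := by
      rw [Polynomial.coeff_map, h1, map_one]
    have hc0 : (P.map (projO k O π e ψ i)).coeff 0 ∈ Ideal.span {π i} := by
      rw [Polynomial.coeff_map]
      have := hsmall₁ i hi
      rw [pow_one] at this
      exact this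
    obtain ⟨a, haroot, haI⟩ := newton (Ideal.span {π i}) (P.map (projO k O π e ψ i)) hc1 hc0
    refine ⟨a, fun _ => ⟨haroot, ?_⟩⟩
    have hmax : a ∈ IsLocalRing.maximalIdeal (O i) := by
      rw [(hπ i).maximalIdeal_eq]; exact haI
    have := root_mem_span (P.map (projO k O π e ψ i)) hc1 hmax haroot
    rwa [Polynomial.coeff_map] at this
  choose afun ha using hex
  have hmem : ((fun i => afun i, (0 : PowerSeries k)) : ProdRing k O)
      ∈ closeSubring k O π e ψ := by
    apply mem_closeSubring_of_small
    · rfl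
    · intro n hn
      obtain ⟨B₂, _, hsmall₂⟩ := coords_small k O π e ψ he (P.coeff 0) h0inf n
      refine ⟨max B₁ B₂, fun i hi => ?_⟩
      have hi1 : B₁ ≤ i := (le_max_left _ _).trans hi
      have hi2 : B₂ ≤ i := (le_max_right _ _).trans hi
      have hsub : Ideal.span {projO k O π e ψ i (P.coeff 0)} ≤ Ideal.span {π i ^ n} :=
        Ideal.span_singleton_le_span_singleton.mpr
          (Ideal.mem_span_singleton.mp (hsmall₂ i hi2))
      exact hsub ((ha i hi1).2)
  set a : closeSubring k O π e ψ := ⟨_, hmem⟩ with haa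
  refine ⟨a, B₁, rfl, ?_, ?_⟩
  · show projInf k O π e ψ (P.eval a) = 0
    have h2 : projInf k O π e ψ (P.eval a)
        = (P.map (projInf k O π e ψ)).eval (projInf k O π e ψ a) := by
      rw [Polynomial.eval_map, Polynomial.eval₂_at_apply]
    have h3 : projInf k O π e ψ a = 0 := rfl
    rw [h2, h3, ← Polynomial.coeff_zero_eq_eval_zero, Polynomial.coeff_map]
    show projInf k O π e ψ (P.coeff 0) = 0
    exact h0inf
  · intro i hi
    have h2 : projO k O π e ψ i (P.eval a)
        = (P.map (projO k O π e ψ i)).eval (projO k O π e ψ i a) := by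
      rw [Polynomial.eval_map, Polynomial.eval₂_at_apply]
    have h3 : projO k O π e ψ i a = afun i := rfl
    rw [h2, h3]
    exact (ha i hi).1

end RootO

section MainHensel

open Polynomial

variable [∀ i, IsDomain (O i)] [∀ i, IsDiscreteValuationRing (O i)]
variable [∀ i, IsAdicComplete (Ideal.span {π i}) (O i)]

lemma coeff_comp_C_mul_X {R : Type*} [CommRing R] (p : R[X]) (v : R) (n : ℕ) :
    (p.comp (Polynomial.C v * Polynomial.X)).coeff n = p.coeff n * v ^ n := by
  induction p using Polynomial.induction_on' with
  | add p q hp hq =>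
      rw [Polynomial.add_comp, Polynomial.coeff_add, hp, hq, Polynomial.coeff_add, add_mul]
  | monomial m b =>
      rw [← Polynomial.C_mul_X_pow_eq_monomial, Polynomial.mul_comp, Polynomial.C_comp,
        Polynomial.X_pow_comp, mul_pow, ← Polynomial.C_pow, ← mul_assoc, ← Polynomial.C_mul]
      simp only [Polynomial.coeff_C_mul, Polynomial.coeff_X_pow]
      by_cases h : n = m
      · subst h; simp
      · simp [h]

lemma coeff_polyOf {R : Type*} [CommRing R] (D : ℕ) (p : ℕ → R) (n : ℕ) :
    (∑ j ∈ Finset.range (D+1), Polynomial.monomial j (p j)).coeff n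
      = if n < D + 1 then p n else 0 := by
  rw [Polynomial.finset_sum_coeff]
  simp only [Polynomial.coeff_monomial]
  rw [Finset.sum_ite_eq' (Finset.range (D+1)) n p]
  simp [Finset.mem_range]

lemma algebraMap_toOgeB_mul_piO (B : ℕ) (x : closeSubring k O π e ψ) (m : ℕ) :
    algebraMap _ (FgeBI k O π e ψ hψ B) (toOgeB k O π e ψ B (x * piO k O π e ψ hψ ^ m))
      = algebraMap _ (FgeBI k O π e ψ hψ B) (toOgeB k O π e ψ B x)
        * (algebraMap _ (FgeBI k O π e ψ hψ B) (piGe k O π e ψ hψ B))^m := by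
  rw [map_mul, map_pow, map_mul, map_pow, piGe_eq]

include hψ in
lemma main_hensel (he : ∀ i, i ≤ e i) (hπ : ∀ i, Irreducible (π i))
    (B : ℕ) (F : Polynomial (FgeBI k O π e ψ hψ B)) (y₀ : FgeBI k O π e ψ hψ B)
    (hroot : FgeBtoFinf k O π e ψ hψ B (F.eval y₀) = 0)
    (hunit : IsUnit (F.derivative.eval y₀)) :
    ∃ (B' : ℕ) (h : B ≤ B') (b : FgeBI k O π e ψ hψ B'),
      (F.map (transitF k O π e ψ hψ h)).eval b = 0
      ∧ FgeBtoFinf k O π e ψ hψ B' b = FgeBtoFinf k O π e ψ hψ B y₀ := by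
  classical
  set u : (FgeBI k O π e ψ hψ B)ˣ := hunit.unit with hu
  set uv : FgeBI k O π e ψ hψ B := ((u : (FgeBI k O π e ψ hψ B)ˣ) : FgeBI k O π e ψ hψ B)
    with huvdef
  set uw : FgeBI k O π e ψ hψ B := ((u⁻¹ : (FgeBI k O π e ψ hψ B)ˣ) : FgeBI k O π e ψ hψ B)
    with huwdef
  have huv1 : uv * uw = 1 := by rw [huvdef, huwdef]; exact Units.mul_inv u
  have huval : uv = F.derivative.eval y₀ := hunit.unit_spec
  set q : Polynomial (FgeBI k O π e ψ hψ B) := Polynomial.C y₀ + Polynomial.C uv * Polynomial.X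
    with hqdef
  set G : Polynomial (FgeBI k O π e ψ hψ B) := Polynomial.C (uw^2) * (F.comp q)
    with hGdef
  have hq0 : q.eval 0 = y₀ := by simp [hqdef]
  have hcomp0 : (F.comp q).coeff 0 = F.eval y₀ := by
    rw [Polynomial.coeff_zero_eq_eval_zero, Polynomial.eval_comp, hq0]
  have hcomp1 : (F.comp q).coeff 1 = uv * uv := by
    have hd := Polynomial.coeff_derivative (F.comp q) 0
    norm_num at hd
    rw [← hd, Polynomial.coeff_zero_eq_eval_zero, Polynomial.derivative_comp,
      Polynomial.eval_mul, Polynomial.eval_comp, hq0]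
    have hqd : q.derivative.eval 0 = uv := by simp [hqdef]
    rw [hqd, huval]
  have hG1 : G.coeff 1 = 1 := by
    rw [hGdef, Polynomial.coeff_C_mul, hcomp1]
    calc uw^2 * (uv * uv) = (uv * uw) * (uv * uw) := by ring
      _ = 1 := by rw [huv1, one_mul]
  have hG0 : FgeBtoFinf k O π e ψ hψ B (G.coeff 0) = 0 := by
    rw [hGdef, Polynomial.coeff_C_mul, hcomp0, map_mul, hroot, mul_zero]
  have hGid : Polynomial.C (uv^2) * G = F.comp q := by
    rw [hGdef, ← mul_assoc, ← map_mul]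
    have h2 : uv^2 * uw^2 = 1 := by
      calc uv^2 * uw^2 = (uv * uw) * (uv * uw) := by ring
        _ = 1 := by rw [huv1, one_mul]
    rw [h2, map_one, one_mul]
  -- normal forms for the coefficients of G
  set D : ℕ := G.natDegree with hDdef
  have hD1 : 1 ≤ D := by
    refine Polynomial.le_natDegree_of_ne_zero ?_
    rw [hG1]
    intro hc
    have := congrArg (FgeBtoFinf k O π e ψ hψ B) hc
    rw [map_one, map_zero] at this
    exact one_ne_zero this
  have hrep : ∀ j, ∃ (x : closeSubring k O π e ψ) (N : ℕ),
      G.coeff j * (algebraMap _ (FgeBI k O π e ψ hψ B) (piGe k O π e ψ hψ B))^N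
        = algebraMap _ (FgeBI k O π e ψ hψ B) (toOgeB k O π e ψ B x) :=
    fun j => exists_rep k O π e ψ hψ B (G.coeff j)
  choose Xf Nf hXf using hrep
  set N : ℕ := Finset.sup (Finset.range (D+1)) Nf with hNdef
  have hNle : ∀ j, j ≤ D → Nf j ≤ N :=
    fun j hj => Finset.le_sup (Finset.mem_range.mpr (Nat.lt_succ_of_le hj))
  set X' : ℕ → closeSubring k O π e ψ :=
    fun j => Xf j * piO k O π e ψ hψ ^ (N - Nf j) with hX'def
  have hX' : ∀ j, j ≤ D →
      G.coeff j * (algebraMap _ (FgeBI k O π e ψ hψ B) (piGe k O π e ψ hψ B))^N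
        = algebraMap _ (FgeBI k O π e ψ hψ B) (toOgeB k O π e ψ B (X' j)) := by
    intro j hj
    calc G.coeff j * (algebraMap _ (FgeBI k O π e ψ hψ B) (piGe k O π e ψ hψ B))^N
        = (G.coeff j * (algebraMap _ (FgeBI k O π e ψ hψ B) (piGe k O π e ψ hψ B))^(Nf j))
          * (algebraMap _ (FgeBI k O π e ψ hψ B) (piGe k O π e ψ hψ B))^(N - Nf j) := by
          rw [mul_assoc, ← pow_add, Nat.add_sub_cancel' (hNle j hj)]
      _ = algebraMap _ (FgeBI k O π e ψ hψ B) (toOgeB k O π e ψ B (Xf j))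
          * (algebraMap _ (FgeBI k O π e ψ hψ B) (piGe k O π e ψ hψ B))^(N - Nf j) := by
          rw [hXf j]
      _ = algebraMap _ (FgeBI k O π e ψ hψ B) (toOgeB k O π e ψ B (X' j)) := by
          rw [hX'def, algebraMap_toOgeB_mul_piO]
  -- infinity coordinate of the constant coefficient vanishes
  set w : closeSubring k O π e ψ := X' 0 with hwdef
  have hw2 : (w : ProdRing k O).2 = 0 := by
    have h1 := congrArg (FgeBtoFinf k O π e ψ hψ B) (hX' 0 (Nat.zero_le D))
    rw [map_mul, map_pow, hG0, zero_mul, FgeBtoFinf_algebraMap, sndGe_toOgeB] at h1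
    exact (IsFractionRing.to_map_eq_zero_iff.mp h1.symm)
  set s : ℕ := N + 1 with hsdef
  obtain ⟨B₂', hB₂'1, hsmall⟩ := coords_small k O π e ψ he w hw2 (N + s)
  set B₂ : ℕ := max B B₂' with hB₂def
  have hBB₂ : B ≤ B₂ := le_max_left _ _
  -- divide w by π^(N+s) beyond B₂
  have hdiv : ∀ i, ∃ d : O i, B₂ ≤ i → (w : ProdRing k O).1 i = π i ^ (N+s) * d := by
    intro i
    by_cases hi : B₂ ≤ i
    · obtain ⟨d, hd⟩ := Ideal.mem_span_singleton.mp
        (hsmall i ((le_max_right _ _).trans hi))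
      exact ⟨d, fun _ => hd⟩
    · exact ⟨0, fun h => absurd h hi⟩
  choose dfun hd using hdiv
  have hw'mem : ((fun i => if B₂ ≤ i then dfun i else 0, (0 : PowerSeries k)) : ProdRing k O)
      ∈ closeSubring k O π e ψ := by
    apply mem_closeSubring_of_small
    · rfl
    · intro n hn
      obtain ⟨B₃', _, hsm3⟩ := coords_small k O π e ψ he w hw2 (n + (N+s))
      refine ⟨max B₂ B₃', fun i hi => ?_⟩
      have hi2 : B₂ ≤ i := (le_max_left _ _).trans hi
      have hi3 : B₃' ≤ i := (le_max_right _ _).trans hi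
      simp only [if_pos hi2]
      refine Ideal.mem_span_singleton.mpr ?_
      have h4 := Ideal.mem_span_singleton.mp (hsm3 i hi3)
      rw [hd i hi2] at h4
      have h5 : π i ^ (N+s) * π i ^ n ∣ π i ^ (N+s) * dfun i := by
        rw [← pow_add]
        convert h4 using 2
        omega
      exact (mul_dvd_mul_iff_left (pow_ne_zero _ (hπ i).ne_zero)).mp h5
  set w' : closeSubring k O π e ψ := ⟨_, hw'mem⟩ with hw'def
  have hww' : toOgeB k O π e ψ B₂ (piO k O π e ψ hψ ^ (N+s) * w') = toOgeB k O π e ψ B₂ w := by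
    refine Subtype.ext (Prod.ext (funext fun i => ?_) ?_)
    · show ((piO k O π e ψ hψ ^ (N+s) * w' : closeSubring k O π e ψ) : ProdRing k O).1 i.1
        = (w : ProdRing k O).1 i.1
      have h6 : ((piO k O π e ψ hψ ^ (N+s) * w' : closeSubring k O π e ψ) : ProdRing k O).1 i.1
          = ((piO k O π e ψ hψ ^ (N+s) : closeSubring k O π e ψ) : ProdRing k O).1 i.1
            * ((w' : closeSubring k O π e ψ) : ProdRing k O).1 i.1 := rfl
      rw [h6, coe_pow_fst]
      show π i.1 ^ (N+s) * (if B₂ ≤ i.1 then dfun i.1 else 0) = _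
      rw [if_pos i.2]
      exact (hd i.1 i.2).symm
    · show ((piO k O π e ψ hψ ^ (N+s) * w' : closeSubring k O π e ψ) : ProdRing k O).2
        = (w : ProdRing k O).2
      have h6 : ((piO k O π e ψ hψ ^ (N+s) * w' : closeSubring k O π e ψ) : ProdRing k O).2
          = ((piO k O π e ψ hψ ^ (N+s) : closeSubring k O π e ψ) : ProdRing k O).2
            * ((w' : closeSubring k O π e ψ) : ProdRing k O).2 := rfl
      rw [h6, hw2]
      show _ * 0 = 0
      rw [mul_zero]
  -- move everything to level B₂
  set τ := transitF k O π e ψ hψ hBB₂ with hτdef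
  set G₂ : Polynomial (FgeBI k O π e ψ hψ B₂) := G.map τ with hG₂def
  set t₂ : FgeBI k O π e ψ hψ B₂ := algebraMap _ _ (piGe k O π e ψ hψ B₂) with ht₂def
  have hτpi : τ (algebraMap _ (FgeBI k O π e ψ hψ B) (piGe k O π e ψ hψ B)) = t₂ := by
    rw [ht₂def, hτdef, piGe_eq, transitF_algebraMap, ← piGe_eq]
  have hX'₂ : ∀ j, j ≤ D → G₂.coeff j * t₂^N
      = algebraMap _ (FgeBI k O π e ψ hψ B₂) (toOgeB k O π e ψ B₂ (X' j)) := by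
    intro j hj
    have h7 := congrArg τ (hX' j hj)
    rw [map_mul, map_pow, hτpi, hτdef, transitF_algebraMap] at h7
    rw [hG₂def, Polynomial.coeff_map]
    exact h7
  have hG₂1 : G₂.coeff 1 = 1 := by rw [hG₂def, Polynomial.coeff_map, hG1, map_one]
  -- the polynomial P over the subring O
  set pc : ℕ → closeSubring k O π e ψ := fun j =>
    if j = 0 then w' else if j = 1 then 1
    else if j ≤ D then X' j * piO k O π e ψ hψ ^ (s*(j-1) - N) else 0 with hpcdef
  set P : Polynomial (closeSubring k O π e ψ) :=
    ∑ j ∈ Finset.range (D+1), Polynomial.monomial j (pc j) with hPdef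
  have hPcoeff : ∀ n, P.coeff n = if n < D + 1 then pc n else 0 := fun n => coeff_polyOf D pc n
  have hP1 : P.coeff 1 = 1 := by
    rw [hPcoeff 1, if_pos (by omega)]
    show (if (1:ℕ) = 0 then w' else if (1:ℕ) = 1 then 1 else _) = 1
    norm_num
  have hP0 : P.coeff 0 = w' := by
    rw [hPcoeff 0, if_pos (by omega)]
    rfl
  set φ₂ : closeSubring k O π e ψ →+* FgeBI k O π e ψ hψ B₂ :=
    (algebraMap _ _).comp (toOgeB k O π e ψ B₂) with hφ₂def
  have ht₂unit : IsUnit t₂ := algebraMap_piGe_isUnit k O π e ψ hψ B₂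
  -- the key polynomial identity at level B₂
  have hHPoly : Polynomial.C (t₂^s) * (P.map φ₂)
      = G₂.comp (Polynomial.C (t₂^s) * Polynomial.X) := by
    apply Polynomial.ext
    intro n
    rw [Polynomial.coeff_C_mul, coeff_comp_C_mul_X, Polynomial.coeff_map, hPcoeff n]
    by_cases hnD : n < D + 1
    · rw [if_pos hnD]
      rcases n with _ | n
      · -- n = 0
        rw [hpcdef]
        show t₂^s * φ₂ w' = G₂.coeff 0 * (t₂^s)^0
        rw [pow_zero, mul_one]
        refine (ht₂unit.pow N).mul_right_cancel ?_
        have e1 : G₂.coeff 0 * t₂ ^ N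
            = algebraMap _ _ (toOgeB k O π e ψ B₂ (piO k O π e ψ hψ ^ (N+s) * w')) := by
          rw [hX'₂ 0 (Nat.zero_le D), ← hww']
        have e2 : algebraMap _ (FgeBI k O π e ψ hψ B₂)
            (toOgeB k O π e ψ B₂ (piO k O π e ψ hψ ^ (N+s) * w'))
            = algebraMap _ _ (toOgeB k O π e ψ B₂ w') * t₂^(N+s) := by
          rw [mul_comm (piO k O π e ψ hψ ^ (N+s)) w', algebraMap_toOgeB_mul_piO, ← ht₂def]
        have e3 : φ₂ w' = algebraMap _ _ (toOgeB k O π e ψ B₂ w') := rfl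
        have e4 : t₂^(N+s) = t₂^s * t₂^N := by rw [← pow_add]; congr 1; omega
        rw [e1, e2, e3, e4]
        ring
      rcases n with _ | n
      · -- n = 1
        rw [hpcdef]
        show t₂^s * φ₂ 1 = G₂.coeff 1 * (t₂^s)^1
        rw [map_one, hG₂1, mul_one, one_mul, pow_one]
      · -- n ≥ 2
        have hn2 : ¬(n + 2 = 0) := by omega
        have hn1 : ¬(n + 2 = 1) := by omega
        have hnle : n + 2 ≤ D := by omega
        rw [hpcdef]
        show t₂^s * φ₂ (if n + 2 = 0 then w' else if n + 2 = 1 then 1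
          else if n + 2 ≤ D then X' (n+2) * piO k O π e ψ hψ ^ (s*(n+2-1) - N) else 0)
          = G₂.coeff (n+2) * (t₂^s)^(n+2)
        rw [if_neg hn2, if_neg hn1, if_pos hnle]
        refine (ht₂unit.pow N).mul_right_cancel ?_
        have hM : N ≤ s * (n+1) := by
          have h1 : N < s := by rw [hsdef]; omega
          have h2 : s ≤ s * (n+1) := Nat.le_mul_of_pos_right s (by omega)
          omega
        have hexp : t₂^s * t₂^(s*(n+2-1) - N) * t₂^N = t₂^(s*(n+2)) := by
          rw [← pow_add, ← pow_add]
          congr 1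
          have h3 : (n+2-1) = n+1 := by omega
          rw [h3]
          have h4 : s*(n+2) = s*(n+1) + s := by ring
          omega
        rw [hφ₂def]
        show t₂ ^ s * ((algebraMap _ _).comp (toOgeB k O π e ψ B₂))
            (X' (n+2) * piO k O π e ψ hψ ^ (s*(n+2-1) - N)) * t₂ ^ N
          = G₂.coeff (n+2) * (t₂^s)^(n+2) * t₂^N
        have h8 : ((algebraMap _ _).comp (toOgeB k O π e ψ B₂))
            (X' (n+2) * piO k O π e ψ hψ ^ (s*(n+2-1) - N))
            = algebraMap _ _ (toOgeB k O π e ψ B₂ (X' (n+2))) * t₂^(s*(n+2-1) - N) := by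
          show algebraMap _ _ (toOgeB k O π e ψ B₂ (X' (n+2)
            * piO k O π e ψ hψ ^ (s*(n+2-1) - N))) = _
          rw [algebraMap_toOgeB_mul_piO, ht₂def]
        rw [h8, ← hX'₂ (n+2) hnle, ← pow_mul]
        calc t₂ ^ s * (G₂.coeff (n+2) * t₂^N * t₂^(s*(n+2-1) - N)) * t₂ ^ N
            = G₂.coeff (n+2) * (t₂^s * t₂^(s*(n+2-1) - N) * t₂^N) * t₂^N := by ring
          _ = G₂.coeff (n+2) * t₂^(s*(n+2)) * t₂^N := by rw [hexp]
    · rw [if_neg hnD, map_zero, mul_zero]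
      have h9 : G₂.coeff n = 0 := by
        have h9' : G.coeff n = 0 := Polynomial.coeff_eq_zero_of_natDegree_lt (by
          have hD' : D = G.natDegree := hDdef
          omega)
        rw [hG₂def, Polynomial.coeff_map, h9', map_zero]
      rw [h9, zero_mul]
  -- find the root of P
  obtain ⟨a, B₁', ha2, hainf, hacoord⟩ := rootO k O π e ψ hψ he hπ P hP1 (by
    rw [hP0])
  set B' : ℕ := max B₂ B₁' with hB'def
  have h₂₃ : B₂ ≤ B' := le_max_left _ _
  have hBB' : B ≤ B' := hBB₂.trans h₂₃
  set σ := transitF k O π e ψ hψ h₂₃ with hσdef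
  set φ₃ : closeSubring k O π e ψ →+* FgeBI k O π e ψ hψ B' :=
    (algebraMap _ _).comp (toOgeB k O π e ψ B') with hφ₃def
  have hφcomm : σ.comp φ₂ = φ₃ := by
    ext z
    show σ (algebraMap _ _ (toOgeB k O π e ψ B₂ z)) = algebraMap _ _ (toOgeB k O π e ψ B' z)
    rw [hσdef, transitF_algebraMap]
  have hPa3 : φ₃ (P.eval a) = 0 := by
    have h10 : toOgeB k O π e ψ B' (P.eval a) = 0 := by
      refine Subtype.ext (Prod.ext (funext fun i => ?_) ?_)
      · show ((P.eval a : closeSubring k O π e ψ) : ProdRing k O).1 i.1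
          = (0 : ProdRingGe k O B').1 i
        have := hacoord i.1 ((le_max_right B₂ B₁').trans i.2)
        exact this
      · exact hainf
    show algebraMap _ _ (toOgeB k O π e ψ B' (P.eval a)) = 0
    rw [h10, map_zero]
  set abar : FgeBI k O π e ψ hψ B' := φ₃ a with habar
  have hH₃root : (P.map φ₃).eval abar = 0 := by
    rw [habar, Polynomial.eval_map, Polynomial.eval₂_at_apply, hPa3]
  set t₃ : FgeBI k O π e ψ hψ B' := algebraMap _ _ (piGe k O π e ψ hψ B') with ht₃def
  have hσt₂ : σ (t₂^s) = t₃^s := by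
    rw [map_pow, ht₂def, hσdef, piGe_eq, transitF_algebraMap, ← piGe_eq, ht₃def]
  -- map the key identity to level B'
  have hG₃root : (G₂.map σ).eval (t₃^s * abar) = 0 := by
    have h11 := congrArg (Polynomial.map σ) hHPoly
    rw [Polynomial.map_mul, Polynomial.map_C, Polynomial.map_comp, Polynomial.map_mul,
      Polynomial.map_C, Polynomial.map_X, Polynomial.map_map, hφcomm, hσt₂] at h11
    have h12 := congrArg (Polynomial.eval abar) h11
    rw [Polynomial.eval_mul, Polynomial.eval_C, hH₃root, mul_zero, Polynomial.eval_comp,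
      Polynomial.eval_mul, Polynomial.eval_C, Polynomial.eval_X] at h12
    exact h12.symm
  -- translate back to F
  set ρ := transitF k O π e ψ hψ hBB' with hρdef
  have hρτ : Polynomial.map ρ F = (F.map τ).map σ := by
    rw [Polynomial.map_map]
    congr 1
    ext z
    show ρ z = σ (τ z)
    rw [hρdef, hσdef, hτdef, transitF_transitF]
  have hGρ : G.map ρ = G₂.map σ := by
    rw [hG₂def, Polynomial.map_map]
    congr 1
    ext z
    show ρ z = σ (τ z)
    rw [hρdef, hσdef, hτdef, transitF_transitF]
  have hGidρ := congrArg (Polynomial.map ρ) hGid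
  rw [Polynomial.map_mul, Polynomial.map_C, Polynomial.map_comp, hGρ] at hGidρ
  refine ⟨B', hBB', ρ y₀ + ρ uv * (t₃^s * abar), ?_, ?_⟩
  · have h13 := congrArg (Polynomial.eval (t₃^s * abar)) hGidρ
    rw [Polynomial.eval_mul, Polynomial.eval_C, hG₃root, mul_zero, Polynomial.eval_comp] at h13
    have h14 : (Polynomial.map ρ q).eval (t₃^s * abar) = ρ y₀ + ρ uv * (t₃^s * abar) := by
      rw [hqdef]
      simp [Polynomial.eval_add, Polynomial.eval_mul]
    rw [h14] at h13
    exact h13.symm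
  · rw [map_add, map_mul, FgeBtoFinf_transitF]
    have h15 : FgeBtoFinf k O π e ψ hψ B' abar = 0 := by
      rw [habar, hφ₃def]
      show FgeBtoFinf k O π e ψ hψ B' (algebraMap _ _ (toOgeB k O π e ψ B' a)) = 0
      rw [FgeBtoFinf_algebraMap, sndGe_toOgeB, ha2, map_zero]
    rw [map_mul, h15, mul_zero, mul_zero, add_zero]

lemma map_poly_eval {R S : Type*} [CommRing R] [CommRing S] (φ : R →+* S)
    (p : Polynomial R) (y : R) : (p.map φ).eval (φ y) = φ (p.eval y) := by
  rw [Polynomial.eval_map, Polynomial.eval₂_at_apply]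

end MainHensel

end CF
theorem statement_7
    (p : ℕ) (hp : p.Prime)
    (k : Type) [Field k] [CharP k p] [ExpChar k p] [PerfectRing k p]
    (O : ℕ → Type) [∀ i, CommRing (O i)] [∀ i, IsDomain (O i)]
    [∀ i, IsDiscreteValuationRing (O i)] [∀ i, CharZero (O i)]
    (π : ∀ i, O i) (hπ : ∀ i, Irreducible (π i))
    [∀ i, IsAdicComplete (Ideal.span {π i}) (O i)]
    (ρ : ∀ i, ((O i) ⧸ (Ideal.span {π i})) ≃+* k)
    (e : ℕ → ℕ) (he : ∀ i, i ≤ e i)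
    (hpe : ∀ i, Ideal.span {((p : O i))} = Ideal.span {π i ^ e i})
    (ψ : ∀ i, ((PowerSeries k) ⧸ (Ideal.span {(X : PowerSeries k) ^ e i})) ≃+*
      ((O i) ⧸ (Ideal.span {π i ^ e i})))
    (hψ : ∀ i, ψ i (Ideal.Quotient.mk _ (X : PowerSeries k)) = Ideal.Quotient.mk _ (π i))
    (A : Type) [CommRing A]
    (g : ∀ B : ℕ, FgeBI k O π e ψ hψ B →+* A)
    (hcompat : ∀ B : ℕ, (g (B + 1)).comp (FgeBstep k O π e ψ hψ B) = g B)
    (hsurj : ∀ a : A, ∃ (B : ℕ) (x : FgeBI k O π e ψ hψ B), g B x = a)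
    (hker : ∀ (B : ℕ) (x : FgeBI k O π e ψ hψ B), g B x = 0 →
      ∃ (B' : ℕ) (h : B ≤ B'), transitF k O π e ψ hψ h x = 0) :
    HenselianLocalRing A
    ∧ ∀ h : A →+* FractionRing (PowerSeries k),
        (∀ B : ℕ, h.comp (g B) = FgeBtoFinf k O π e ψ hψ B) →
        Function.Surjective h ∧ (RingHom.ker h).IsMaximal := by
  classical
  set hh : A →+* FractionRing (PowerSeries k) := CF.hA k O π e ψ hψ g hcompat hsurj hker
    with hhdef
  have hhsurj : Function.Surjective hh := CF.hA_surjective k O π e ψ hψ g hcompat hsurj hker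
  have hhg : ∀ (B : ℕ) (x : FgeBI k O π e ψ hψ B), hh (g B x) = FgeBtoFinf k O π e ψ hψ B x :=
    fun B x => CF.hA_g k O π e ψ hψ g hcompat hsurj hker x
  haveI hnt : Nontrivial A := by
    refine ⟨1, 0, fun hc => ?_⟩
    have := congrArg hh hc
    rw [map_one, map_zero] at this
    exact one_ne_zero this
  -- elements with nonzero image are units
  have hu : ∀ a : A, hh a ≠ 0 → IsUnit a := by
    intro a ha
    obtain ⟨B, x, hx⟩ := hsurj a
    rw [← hx] at ha ⊢
    rw [hhg B x] at ha
    obtain ⟨B', hB', hunit⟩ := CF.isUnit_transitF k O π e ψ hψ he hπ B x ha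
    have := hunit.map (g B')
    rwa [CF.g_comp_transitF k O π e ψ hψ g hcompat hB' x] at this
  haveI hloc : IsLocalRing A := by
    refine IsLocalRing.of_nonunits_add ?_
    intro a b ha hb
    have ha0 : hh a = 0 := by
      by_contra h0
      exact (mem_nonunits_iff.mp ha) (hu a h0)
    have hb0 : hh b = 0 := by
      by_contra h0
      exact (mem_nonunits_iff.mp hb) (hu b h0)
    refine mem_nonunits_iff.mpr (fun hab => ?_)
    have := hab.map hh
    rw [map_add, ha0, hb0, add_zero] at this
    exact not_isUnit_zero this
  have hmax : (RingHom.ker hh).IsMaximal := RingHom.ker_isMaximal_of_surjective hh hhsurj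
  have hkerm : RingHom.ker hh = IsLocalRing.maximalIdeal A := IsLocalRing.eq_maximalIdeal hmax
  constructor
  · -- Henselian local ring
    refine { toIsLocalRing := hloc, is_henselian := ?_ }
    intro f hf a₀ h₁ h₂
    -- descend the polynomial to a finite level
    have hex : ∀ j, ∃ (B : ℕ) (x : FgeBI k O π e ψ hψ B), g B x = f.coeff j :=
      fun j => hsurj _
    choose Bf xf hxf using hex
    set D : ℕ := f.natDegree with hDdef
    set B₀ : ℕ := Finset.sup (Finset.range (D+1)) Bf with hB₀def
    have hle : ∀ j, j ≤ D → Bf j ≤ B₀ :=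
      fun j hj => Finset.le_sup (Finset.mem_range.mpr (Nat.lt_succ_of_le hj))
    set cf : ℕ → FgeBI k O π e ψ hψ B₀ := fun j =>
      if h : j ≤ D then transitF k O π e ψ hψ (hle j h) (xf j) else 0 with hcfdef
    set Fp : Polynomial (FgeBI k O π e ψ hψ B₀) :=
      ∑ j ∈ Finset.range (D+1), Polynomial.monomial j (cf j) with hFpdef
    have hFpmap : Fp.map (g B₀) = f := by
      apply Polynomial.ext
      intro n
      rw [Polynomial.coeff_map, hFpdef, CF.coeff_polyOf]
      by_cases hn : n < D + 1
      · rw [if_pos hn]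
        have hn' : n ≤ D := by omega
        show g B₀ (if h : n ≤ D then transitF k O π e ψ hψ (hle n h) (xf n) else 0)
          = f.coeff n
        rw [dif_pos hn', CF.g_comp_transitF k O π e ψ hψ g hcompat, hxf]
      · rw [if_neg hn, map_zero]
        exact (Polynomial.coeff_eq_zero_of_natDegree_lt (by omega)).symm
    obtain ⟨Ba, xa, hxa⟩ := hsurj a₀
    set C₀ : ℕ := max B₀ Ba with hC₀def
    set F₁ : Polynomial (FgeBI k O π e ψ hψ C₀) :=
      Fp.map (transitF k O π e ψ hψ (le_max_left B₀ Ba)) with hF₁def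
    set y₁ : FgeBI k O π e ψ hψ C₀ := transitF k O π e ψ hψ (le_max_right B₀ Ba) xa
      with hy₁def
    have hgy₁ : g C₀ y₁ = a₀ := by
      rw [hy₁def, CF.g_comp_transitF k O π e ψ hψ g hcompat, hxa]
    have hF₁map : F₁.map (g C₀) = f := by
      rw [hF₁def, Polynomial.map_map, ← hFpmap]
      congr 1
      ext z
      show g C₀ (transitF k O π e ψ hψ (le_max_left B₀ Ba) z) = g B₀ z
      rw [CF.g_comp_transitF k O π e ψ hψ g hcompat]
    have hgeval : g C₀ (F₁.eval y₁) = f.eval a₀ := by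
      rw [← CF.map_poly_eval (g C₀) F₁ y₁, hF₁map, hgy₁]
    have hroot₁ : FgeBtoFinf k O π e ψ hψ C₀ (F₁.eval y₁) = 0 := by
      rw [← hhg C₀, hgeval]
      have : f.eval a₀ ∈ RingHom.ker hh := by rw [hkerm]; exact h₁
      exact this
    -- derivative becomes an honest unit at a finite level
    have hgder : g C₀ (F₁.derivative.eval y₁) = f.derivative.eval a₀ := by
      rw [← CF.map_poly_eval (g C₀) F₁.derivative y₁, ← Polynomial.derivative_map, hF₁map, hgy₁]
    obtain ⟨vinv, hvinv⟩ := h₂.exists_right_inv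
    obtain ⟨Bv, xv, hxv⟩ := hsurj vinv
    set C₁ : ℕ := max C₀ Bv with hC₁def
    have hzero : g C₁ (transitF k O π e ψ hψ (le_max_left C₀ Bv) (F₁.derivative.eval y₁)
        * transitF k O π e ψ hψ (le_max_right C₀ Bv) xv - 1) = 0 := by
      rw [map_sub, map_mul, CF.g_comp_transitF k O π e ψ hψ g hcompat,
        CF.g_comp_transitF k O π e ψ hψ g hcompat, hgder, hxv, hvinv, map_one, sub_self]
    obtain ⟨C₂, hC₂, hunit1⟩ := hker _ _ hzero
    rw [map_sub, map_mul, CF.transitF_transitF, CF.transitF_transitF, map_one,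
      sub_eq_zero] at hunit1
    have hunit₂ : IsUnit (transitF k O π e ψ hψ ((le_max_left C₀ Bv).trans hC₂)
        (F₁.derivative.eval y₁)) :=
      IsUnit.of_mul_eq_one _ hunit1
    set ρ₂ := transitF k O π e ψ hψ ((le_max_left C₀ Bv).trans hC₂) with hρ₂def
    set F₂ : Polynomial (FgeBI k O π e ψ hψ C₂) := F₁.map ρ₂ with hF₂def
    set y₂ : FgeBI k O π e ψ hψ C₂ := ρ₂ y₁ with hy₂def
    have hder₂ : F₂.derivative.eval y₂ = ρ₂ (F₁.derivative.eval y₁) := by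
      rw [hF₂def, hy₂def, Polynomial.derivative_map, CF.map_poly_eval]
    have hroot₂ : FgeBtoFinf k O π e ψ hψ C₂ (F₂.eval y₂) = 0 := by
      have : F₂.eval y₂ = ρ₂ (F₁.eval y₁) := by
        rw [hF₂def, hy₂def, CF.map_poly_eval]
      rw [this, hρ₂def, CF.FgeBtoFinf_transitF, hroot₁]
    obtain ⟨B', hB', b, hbroot, hbres⟩ := CF.main_hensel k O π e ψ hψ he hπ C₂ F₂ y₂ hroot₂
      (by rw [hder₂]; exact hunit₂)
    refine ⟨g B' b, ?_, ?_⟩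
    · show f.eval (g B' b) = 0
      have hfchain : (F₂.map (transitF k O π e ψ hψ hB')).map (g B') = f := by
        rw [Polynomial.map_map, hF₂def, Polynomial.map_map, ← hF₁map]
        congr 1
        ext z
        show g B' (transitF k O π e ψ hψ hB' (ρ₂ z)) = g C₀ z
        rw [hρ₂def, CF.transitF_transitF, CF.g_comp_transitF k O π e ψ hψ g hcompat]
      rw [← hfchain, CF.map_poly_eval, hbroot, map_zero]
    · rw [← hkerm]
      show g B' b - a₀ ∈ RingHom.ker hh
      rw [RingHom.mem_ker, map_sub, hhg B' b, hbres, ← hgy₁, hhg C₀ y₁, hy₂def, hρ₂def,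
        CF.FgeBtoFinf_transitF, sub_self]
  · -- the residue field
    intro h hcomp2
    have hsurjh : Function.Surjective h := by
      intro z
      obtain ⟨x, hx⟩ := CF.FgeBtoFinf_surjective k O π e ψ hψ 0 z
      refine ⟨g 0 x, ?_⟩
      have := congrArg (fun φ => φ x) (hcomp2 0)
      simp only [RingHom.coe_comp, Function.comp_apply] at this
      rw [this, hx]
    exact ⟨hsurjh, RingHom.ker_isMaximal_of_surjective h hsurjh⟩
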